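/- Let S = NCS(5) be the left zero semigroup of order 3, i.e. e_i e_j = e_i for all i, j in {1,2,3}. A k-linear operator P on k[S] is a Rota-Baxter operator of weight zero if and only if its matrix C_P belongs to one of the following families (all parameters in k, and in each family the listed square-root parameter s or F is an element of k satisfying the stated quadratic equation): (1) [[a*c/F, a*b/F, a],[c*d/F, b*d/F, d],[c, b, F]] with a, b, c, d nonzero and F nonzero satisfying F^2 = -(a*c + b*d); (2) [[0,0,0],[-c*s/b, -s, d],[c, b, s]] with b, c, d nonzero and s^2 = -b*d; (3) [[-s, 0, a],[-d*s/a, 0, d],[c, 0, s]] with a, c, d nonzero and s^2 = -a*c; (4) [[0, -a*s/d, a],[0, -s, d],[0, b, s]] with a, b, d nonzero and s^2 = -b*d; (5) [[-s, -b*s/c, a],[0,0,0],[c, b, s]] with a, b, c nonzero and s^2 = -a*c; (6) [[0,0,0],[0, -s, d],[0, b, s]] with b, d nonzero and s^2 = -b*d; (7) [[-e*b/c, -e*b^2/c^2, 0],[e, e*b/c, 0],[c, b, 0]] with b, c nonzero and e arbitrary; (8) [[a*e/d, -a^2*e/d^2, a],[e, -a*e/d, d],[0,0,0]] with a, d nonzero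 and e arbitrary; (9) [[-s, 0, a],[0,0,0],[c, 0, s]] with a, c nonzero and s^2 = -a*c; (10) [[0,0,0],[e, 0, d],[0,0,0]] with d nonzero and e arbitrary; (11) [[0,0,0],[e, 0, 0],[c, 0, 0]] with c nonzero and e arbitrary; (12) [[0, e, 0],[0,0,0],[0, b, 0]] with b nonzero and e arbitrary; (13) [[0, e, a],[0,0,0],[0,0,0]] with a nonzero and e arbitrary; (14) [[s, e, 0],[f, -s, 0],[0,0,0]] with e, f arbitrary and s^2 = -e*f. -/

import Mathlib

/- Statement 18: RBOs of weight zero on the semigroup algebra of the left zero semigroup NCS(5) of order 3. -/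

namespace Stmt18

inductive S : Type
  | e1 | e2 | e3
  deriving DecidableEq

instance : Fintype S := ⟨{S.e1, S.e2, S.e3}, fun x => by cases x <;> simp⟩

open S

/-- Multiplication table of the semigroup. -/
instance : Mul S := ⟨fun a b => match a, b with
  | e1, e1 => e1
  | e1, e2 => e1
  | e1, e3 => e1
  | e2, e1 => e2
  | e2, e2 => e2
  | e2, e3 => e2
  | e3, e1 => e3
  | e3, e2 => e3
  | e3, e3 => e3⟩

instance : Semigroup S := { mul_assoc := by decide }

/-- The 3×3 matrix (rows = first index) as a function `S → S → k`. -/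
def mat3 {k : Type*} (a11 a12 a13 a21 a22 a23 a31 a32 a33 : k) : S → S → k :=
  fun i j => match i, j with
  | e1, e1 => a11 | e1, e2 => a12 | e1, e3 => a13
  | e2, e1 => a21 | e2, e2 => a22 | e2, e3 => a23
  | e3, e1 => a31 | e3, e2 => a32 | e3, e3 => a33

lemma mul_def' (a b : S) : a * b = a := by cases a <;> cases b <;> rfl

lemma univ_eq : (Finset.univ : Finset S) = {e1, e2, e3} := by decide

lemma sum_eq {M : Type*} [AddCommMonoid M] (f : S → M) :
    ∑ x, f x = f e1 + f e2 + f e3 := by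
  rw [univ_eq, Finset.sum_insert (by decide), Finset.sum_insert (by decide),
    Finset.sum_singleton, add_assoc]

lemma mat3_congr {k : Type*} {a11 a12 a13 a21 a22 a23 a31 a32 a33
    b11 b12 b13 b21 b22 b23 b31 b32 b33 : k}
    (h11 : a11 = b11) (h12 : a12 = b12) (h13 : a13 = b13)
    (h21 : a21 = b21) (h22 : a22 = b22) (h23 : a23 = b23)
    (h31 : a31 = b31) (h32 : a32 = b32) (h33 : a33 = b33) :
    mat3 a11 a12 a13 a21 a22 a23 a31 a32 a33 = mat3 b11 b12 b13 b21 b22 b23 b31 b32 b33 := by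
  rw [h11, h12, h13, h21, h22, h23, h31, h32, h33]

section

variable {k : Type*} [Field k]

lemma single_eq_smul (a : S) (b : k) :
    (MonoidAlgebra.single a b : MonoidAlgebra k S) = b • MonoidAlgebra.single a 1 := by
  rw [MonoidAlgebra.smul_single', mul_one]

lemma msingle_sum (a : S) (f : S → k) :
    ∑ x, MonoidAlgebra.single a (f x) = MonoidAlgebra.single a (∑ x, f x) :=
  (map_sum (MonoidAlgebra.singleAddHom a) f _).symm

lemma stepA (P : MonoidAlgebra k S →ₗ[k] MonoidAlgebra k S) (C : S → S → k)
    (hC : ∀ i, P (MonoidAlgebra.single i 1) = ∑ j, MonoidAlgebra.single j (C i j)) :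
    (∀ x y, P x * P y = P (x * P y) + P (P x * y)) ↔
      (∀ i q : S, ∑ p, C i p * C p q = 0) := by
  have hsingle : ∀ (i : S) (r : k), P (MonoidAlgebra.single i r)
      = ∑ j, MonoidAlgebra.single j (r * C i j) := by
    intro i r
    rw [single_eq_smul, map_smul, hC, Finset.smul_sum]
    simp [MonoidAlgebra.smul_single']
  have hb1 : ∀ i j : S,
      P (MonoidAlgebra.single i 1) * P (MonoidAlgebra.single j 1)
        = P (MonoidAlgebra.single i 1 * P (MonoidAlgebra.single j 1)) := by
    intro i j
    have R : (MonoidAlgebra.single i 1 : MonoidAlgebra k S) * P (MonoidAlgebra.single j 1)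
        = MonoidAlgebra.single i (∑ q, C j q) := by
      rw [hC j, Finset.mul_sum]
      simp only [MonoidAlgebra.single_mul_single, mul_def', one_mul]
      rw [msingle_sum]
    have L : P (MonoidAlgebra.single i 1) * P (MonoidAlgebra.single j 1)
        = ∑ p, MonoidAlgebra.single p ((∑ q, C j q) * C i p) := by
      rw [hC i, hC j, Finset.sum_mul_sum]
      simp only [MonoidAlgebra.single_mul_single, mul_def']
      refine Finset.sum_congr rfl (fun p _ => ?_)
      rw [msingle_sum]
      congr 1
      rw [Finset.sum_mul]
      exact Finset.sum_congr rfl (fun q _ => by ring)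
    rw [L, R, hsingle]
  have hb2 : ∀ i j : S,
      P (P (MonoidAlgebra.single i 1) * MonoidAlgebra.single j 1)
        = ∑ q, MonoidAlgebra.single q (∑ p, C i p * C p q) := by
    intro i j
    have R : P (MonoidAlgebra.single i 1) * (MonoidAlgebra.single j 1 : MonoidAlgebra k S)
        = ∑ p, MonoidAlgebra.single p (C i p) := by
      rw [hC i, Finset.sum_mul]
      simp only [MonoidAlgebra.single_mul_single, mul_def', mul_one]
    rw [R, map_sum]
    simp only [hsingle]
    rw [Finset.sum_comm]
    exact Finset.sum_congr rfl (fun q _ => msingle_sum _ _)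
  constructor
  · intro h i q
    have h1 := h (MonoidAlgebra.single i 1) (MonoidAlgebra.single i 1)
    rw [hb1 i i, hb2 i i] at h1
    have h0 : (∑ q, MonoidAlgebra.single q (∑ p, C i p * C p q) : MonoidAlgebra k S) = 0 :=
      (left_eq_add.mp h1)
    have := congrArg (fun x => MonoidAlgebra.coeff x q) h0
    simpa [MonoidAlgebra.coeff_sum, MonoidAlgebra.coeff_single, Finsupp.finset_sum_apply, Finsupp.single_apply] using this
  · intro h x y
    have key : ∀ i j : S, P (MonoidAlgebra.single i 1) * P (MonoidAlgebra.single j 1)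
        = P (MonoidAlgebra.single i 1 * P (MonoidAlgebra.single j 1))
          + P (P (MonoidAlgebra.single i 1) * MonoidAlgebra.single j 1) := by
      intro i j
      rw [hb1 i j, hb2 i j]
      simp [h i]
    induction x using MonoidAlgebra.induction_linear with
    | zero => simp
    | add f g hf hg =>
      simp only [map_add, add_mul, hf, hg]
      abel
    | single a b =>
      induction y using MonoidAlgebra.induction_linear with
      | zero => simp
      | add f g hf hg =>
        simp only [map_add, mul_add, hf, hg]
        abel
      | single c d =>
        show P (MonoidAlgebra.single a b) * P (MonoidAlgebra.single c d)
          = P (MonoidAlgebra.single a b * P (MonoidAlgebra.single c d))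
            + P (P (MonoidAlgebra.single a b) * MonoidAlgebra.single c d)
        rw [single_eq_smul a b, single_eq_smul c d, map_smul, map_smul, smul_mul_assoc,
          mul_smul_comm, smul_mul_assoc, mul_smul_comm, map_smul, map_smul, smul_mul_assoc,
          mul_smul_comm, map_smul, map_smul, key a c, smul_add, smul_add]

lemma backward_aux (u1 u2 u3 v1 v2 v3 : k) (tr : v1*u1 + v2*u2 + v3*u3 = 0) :
    ∀ i q : S, ∑ p, mat3 (u1*v1) (u1*v2) (u1*v3) (u2*v1) (u2*v2) (u2*v3) (u3*v1) (u3*v2) (u3*v3) i p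
      * mat3 (u1*v1) (u1*v2) (u1*v3) (u2*v1) (u2*v2) (u2*v3) (u3*v1) (u3*v2) (u3*v3) p q = 0 := by
  intro i q
  rw [sum_eq]
  cases i <;> cases q <;> simp only [mat3] <;>
    first
      | linear_combination (u1*v1)*tr | linear_combination (u1*v2)*tr | linear_combination (u1*v3)*tr
      | linear_combination (u2*v1)*tr | linear_combination (u2*v2)*tr | linear_combination (u2*v3)*tr
      | linear_combination (u3*v1)*tr | linear_combination (u3*v2)*tr | linear_combination (u3*v3)*tr

end

theorem rbo_NCS5 {k : Type*} [Field k] [CharZero k]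
    (P : MonoidAlgebra k S →ₗ[k] MonoidAlgebra k S) (C : S → S → k)
    (hC : ∀ i, P (MonoidAlgebra.single i 1) = ∑ j, MonoidAlgebra.single j (C i j)) :
    (∀ x y, P x * P y = P (x * P y) + P (P x * y)) ↔
      ((∃ a b c d F : k, a ≠ 0 ∧ b ≠ 0 ∧ c ≠ 0 ∧ d ≠ 0 ∧ F ≠ 0 ∧ F ^ 2 = -(a * c + b * d) ∧ C = mat3 (a * c / F) (a * b / F) a (c * d / F) (b * d / F) d c b F) ∨
      (∃ b c d s : k, b ≠ 0 ∧ c ≠ 0 ∧ d ≠ 0 ∧ s ^ 2 = -(b * d) ∧ C = mat3 0 0 0 (-(c * s) / b) (-s) d c b s) ∨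
      (∃ a c d s : k, a ≠ 0 ∧ c ≠ 0 ∧ d ≠ 0 ∧ s ^ 2 = -(a * c) ∧ C = mat3 (-s) 0 a (-(d * s) / a) 0 d c 0 s) ∨
      (∃ a b d s : k, a ≠ 0 ∧ b ≠ 0 ∧ d ≠ 0 ∧ s ^ 2 = -(b * d) ∧ C = mat3 0 (-(a * s) / d) a 0 (-s) d 0 b s) ∨
      (∃ a b c s : k, a ≠ 0 ∧ b ≠ 0 ∧ c ≠ 0 ∧ s ^ 2 = -(a * c) ∧ C = mat3 (-s) (-(b * s) / c) a 0 0 0 c b s) ∨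
      (∃ b d s : k, b ≠ 0 ∧ d ≠ 0 ∧ s ^ 2 = -(b * d) ∧ C = mat3 0 0 0 0 (-s) d 0 b s) ∨
      (∃ b c e : k, b ≠ 0 ∧ c ≠ 0 ∧ C = mat3 (-(e * b) / c) (-(e * b ^ 2) / c ^ 2) 0 e (e * b / c) 0 c b 0) ∨
      (∃ a d e : k, a ≠ 0 ∧ d ≠ 0 ∧ C = mat3 (a * e / d) (-(a ^ 2 * e) / d ^ 2) a e (-(a * e) / d) d 0 0 0) ∨
      (∃ a c s : k, a ≠ 0 ∧ c ≠ 0 ∧ s ^ 2 = -(a * c) ∧ C = mat3 (-s) 0 a 0 0 0 c 0 s) ∨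
      (∃ d e : k, d ≠ 0 ∧ C = mat3 0 0 0 e 0 d 0 0 0) ∨
      (∃ c e : k, c ≠ 0 ∧ C = mat3 0 0 0 e 0 0 c 0 0) ∨
      (∃ b e : k, b ≠ 0 ∧ C = mat3 0 e 0 0 0 0 0 b 0) ∨
      (∃ a e : k, a ≠ 0 ∧ C = mat3 0 e a 0 0 0 0 0 0) ∨
      (∃ e f s : k, s ^ 2 = -(e * f) ∧ C = mat3 s e 0 f (-s) 0 0 0 0)) := by
  rw [stepA P C hC]
  constructor
  · -- forward: equations ⟹ classification
    intro h
    obtain ⟨x1,x2,x3,x4,x5,x6,x7,x8,x9, rfl⟩ :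
        ∃ x1 x2 x3 x4 x5 x6 x7 x8 x9, C = mat3 x1 x2 x3 x4 x5 x6 x7 x8 x9 :=
      ⟨_,_,_,_,_,_,_,_,_, by funext i j; cases i <;> cases j <;> rfl⟩
    have h11 : x1*x1 + x2*x4 + x3*x7 = 0 := by have := h e1 e1; rw [sum_eq] at this; exact this
    have h12 : x1*x2 + x2*x5 + x3*x8 = 0 := by have := h e1 e2; rw [sum_eq] at this; exact this
    have h13 : x1*x3 + x2*x6 + x3*x9 = 0 := by have := h e1 e3; rw [sum_eq] at this; exact this
    have h21 : x4*x1 + x5*x4 + x6*x7 = 0 := by have := h e2 e1; rw [sum_eq] at this; exact this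
    have h22 : x4*x2 + x5*x5 + x6*x8 = 0 := by have := h e2 e2; rw [sum_eq] at this; exact this
    have h23 : x4*x3 + x5*x6 + x6*x9 = 0 := by have := h e2 e3; rw [sum_eq] at this; exact this
    have h31 : x7*x1 + x8*x4 + x9*x7 = 0 := by have := h e3 e1; rw [sum_eq] at this; exact this
    have h32 : x7*x2 + x8*x5 + x9*x8 = 0 := by have := h e3 e2; rw [sum_eq] at this; exact this
    have h33 : x7*x3 + x8*x6 + x9*x9 = 0 := by have := h e3 e3; rw [sum_eq] at this; exact this
    have hm1 : x1*x8 = x2*x7 := by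
      have sq : (x1*x8 - x2*x7)^2 = 0 := by
        linear_combination (x8*x8)*h11 - (x7*x8)*h12 - (x2*x8)*h31 + (x2*x7)*h32
      linear_combination sq_eq_zero_iff.mp sq
    have hm2 : x1*x9 = x3*x7 := by
      have sq : (x1*x9 - x3*x7)^2 = 0 := by
        linear_combination (-(x6*x8) + x3*x7 - x2*x4)*h11 + (x6*x7)*h12 - (2*x1*x7)*h13
          + (x1*x2 - x2*x5)*h21 + (x2*x4)*h22 + (x1*x1)*h33
      linear_combination sq_eq_zero_iff.mp sq
    have hm3 : x2*x9 = x3*x8 := by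
      have sq : (x2*x9 - x3*x8)^2 = 0 := by
        linear_combination (-(x2*x2))*h11 + (x3*x8 - x2*x5 + x1*x2)*h12 - (2*x2*x8)*h13
          + (x2*x2)*h22 + (x2*x2)*h33
      linear_combination sq_eq_zero_iff.mp sq
    have hm4 : x4*x8 = x5*x7 := by
      have sq : (x4*x8 - x5*x7)^2 = 0 := by
        linear_combination (-(x7*x8))*h21 + (x7*x7)*h22 + (x4*x8)*h31 - (x4*x7)*h32
      linear_combination sq_eq_zero_iff.mp sq
    have hm5 : x4*x9 = x6*x7 := by
      have sq : (x4*x9 - x6*x7)^2 = 0 := by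
        linear_combination (x4*x4)*h11 + (x6*x7 + x4*x5 - x1*x4)*h21 - (x4*x4)*h22
          - (2*x4*x7)*h23 + (x4*x4)*h33
      linear_combination sq_eq_zero_iff.mp sq
    have hm6 : x5*x9 = x6*x8 := by
      have sq : (x5*x9 - x6*x8)^2 = 0 := by
        linear_combination (-(x9*x9) - x6*x8)*h11 + (x6*x7 + x4*x9 + x4*x5)*h12
          + (x7*x9 - x1*x7)*h13 + (-(x2*x9) - x2*x5)*h21 + (x9*x9 + x6*x8)*h22
          + (-(x8*x9) - x5*x8)*h23 + (x1*x1)*h33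
      linear_combination sq_eq_zero_iff.mp sq
    have ht : x1 + x5 + x9 = 0 := by
      have p4 : (x1 + x5 + x9)^4 = 0 := by
        linear_combination (-(6*x9*x9) - 18*x6*x8 + 12*x5*x9 + 4*x1*x9 + 4*x1*x5 + x1*x1)*h11
          + (18*x6*x7 - 11*x4*x9 + x4*x5 - 2*x1*x4)*h12
          + (5*x7*x9 - 16*x5*x7 + 18*x4*x8 - 13*x1*x7)*h13
          + (-(5*x2*x9) - 2*x2*x5 - 5*x1*x2)*h21
          + (6*x9*x9 + 4*x5*x9 + x5*x5 + 12*x1*x9 + 4*x1*x5 + 6*x1*x1)*h22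
          + (-(7*x8*x9) - x5*x8 - 16*x1*x8)*h23
          + (x9*x9 + 4*x5*x9 + 4*x1*x9 + 12*x1*x5 + 12*x1*x1)*h33
      exact (pow_eq_zero_iff (by norm_num)).mp p4
    by_cases hc : x7 = 0
    · by_cases hb : x8 = 0
      · -- CASE C: third row begins 0 0, x9 = 0 forced
        have hF0 : x9 = 0 := by
          have : x9*x9 = 0 := by rw [hc, hb] at h33; linear_combination h33
          exact mul_self_eq_zero.mp this
        have hx5 : x5 = -x1 := by linear_combination ht - hF0
        by_cases ha3 : x3 = 0
        · by_cases h6 : x6 = 0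
          · -- family 14
            refine Or.inr (Or.inr (Or.inr (Or.inr (Or.inr (Or.inr (Or.inr (Or.inr (Or.inr
              (Or.inr (Or.inr (Or.inr (Or.inr ⟨x2, x4, x1, ?_, ?_⟩))))))))))))
            · linear_combination h11 - x7*ha3
            · exact mat3_congr rfl rfl ha3 rfl hx5 h6 hc hb hF0
          · -- family 10
            have hx2 : x2 = 0 := by
              have : x2*x6 = 0 := by rw [ha3] at h13; rw [hF0] at h13; linear_combination h13
              exact (mul_eq_zero.mp this).resolve_right h6
            have hx5' : x5 = 0 := by
              have : x5*x6 = 0 := by rw [ha3, hF0] at h23; linear_combination h23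
              exact (mul_eq_zero.mp this).resolve_right h6
            have hx1 : x1 = 0 := by linear_combination hx5 - hx5'
            refine Or.inr (Or.inr (Or.inr (Or.inr (Or.inr (Or.inr (Or.inr (Or.inr (Or.inr
              (Or.inl ⟨x6, x4, h6, ?_⟩)))))))))
            exact mat3_congr hx1 hx2 ha3 rfl hx5' rfl hc hb hF0
        · by_cases h6 : x6 = 0
          · -- family 13
            have hx4 : x4 = 0 := by
              have : x4*x3 = 0 := by rw [h6] at h23; linear_combination h23
              exact (mul_eq_zero.mp this).resolve_right ha3
            have hx1 : x1 = 0 := by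
              have : x1*x3 = 0 := by rw [h6, hF0] at h13; linear_combination h13
              exact (mul_eq_zero.mp this).resolve_right ha3
            have hx5' : x5 = 0 := by linear_combination hx5 - hx1
            refine Or.inr (Or.inr (Or.inr (Or.inr (Or.inr (Or.inr (Or.inr (Or.inr (Or.inr
              (Or.inr (Or.inr (Or.inr (Or.inl ⟨x3, x2, ha3, ?_⟩))))))))))))
            exact mat3_congr hx1 rfl rfl hx4 hx5' h6 hc hb hF0
          · -- family 8
            have f1 : x1*x6 = x3*x4 := by linear_combination x6*ht - h23
            refine Or.inr (Or.inr (Or.inr (Or.inr (Or.inr (Or.inr (Or.inr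
              (Or.inl ⟨x3, x6, x4, ha3, h6, ?_⟩)))))))
            refine mat3_congr ?_ ?_ rfl rfl ?_ rfl hc hb hF0
            · field_simp
              linear_combination f1
            · field_simp
              linear_combination x6*h13 - x3*f1 - x3*x6*hF0
            · field_simp
              linear_combination h23 - x6*hF0
      · -- CASE B: x7 = 0, x8 ≠ 0
        have hx1 : x1 = 0 := by
          have : x1*x8 = 0 := by rw [hc] at hm1; linear_combination hm1
          exact (mul_eq_zero.mp this).resolve_right hb
        have hx4 : x4 = 0 := by
          have : x4*x8 = 0 := by rw [hc] at hm4; linear_combination hm4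
          exact (mul_eq_zero.mp this).resolve_right hb
        by_cases hF : x9 = 0
        · -- family 12
          have hx6 : x6 = 0 := by
            have : x6*x8 = 0 := by rw [hF] at hm6; linear_combination -hm6
            exact (mul_eq_zero.mp this).resolve_right hb
          have hx3 : x3 = 0 := by
            have : x3*x8 = 0 := by rw [hF] at hm3; linear_combination -hm3
            exact (mul_eq_zero.mp this).resolve_right hb
          have hx5 : x5 = 0 := by linear_combination ht - hx1 - hF
          refine Or.inr (Or.inr (Or.inr (Or.inr (Or.inr (Or.inr (Or.inr (Or.inr (Or.inr
            (Or.inr (Or.inr (Or.inl ⟨x8, x2, hb, ?_⟩)))))))))))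
          exact mat3_congr hx1 rfl hx3 hx4 hx5 hx6 hc rfl hF
        · have hx5 : x5 = -x9 := by linear_combination ht - hx1
          have h6 : x6 ≠ 0 := by
            intro h60
            have : x5*x9 = 0 := by rw [h60] at hm6; linear_combination hm6
            have h50 : x5 = 0 := (mul_eq_zero.mp this).resolve_right hF
            exact hF (by linear_combination hx5 - h50)
          by_cases ha3 : x3 = 0
          · -- family 6
            have hx2 : x2 = 0 := by
              have : x2*x9 = 0 := by rw [ha3] at hm3; linear_combination hm3
              exact (mul_eq_zero.mp this).resolve_right hF
            refine Or.inr (Or.inr (Or.inr (Or.inr (Or.inr (Or.inl ⟨x8, x6, x9, hb, h6, ?_, ?_⟩)))))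
            · linear_combination x9*hx5 - hm6
            · exact mat3_congr hx1 hx2 ha3 hx4 hx5 rfl hc rfl rfl
          · -- family 4
            refine Or.inr (Or.inr (Or.inr (Or.inl ⟨x3, x8, x6, x9, ha3, hb, h6, ?_, ?_⟩)))
            · linear_combination x9*hx5 - hm6
            · refine mat3_congr hx1 ?_ rfl hx4 hx5 rfl hc rfl rfl
              have key : x2*x6 = -(x3*x9) :=
                mul_left_cancel₀ hF (by linear_combination x6*hm3 + x3*(x9*hx5 - hm6))
              field_simp
              linear_combination key
    · -- CASE A: x7 ≠ 0
      by_cases hF : x9 = 0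
      · -- A-III
        have hx3 : x3 = 0 := by
          have : x3*x7 = 0 := by rw [hF] at hm2; linear_combination -hm2
          exact (mul_eq_zero.mp this).resolve_right hc
        have hx6 : x6 = 0 := by
          have : x6*x7 = 0 := by rw [hF] at hm5; linear_combination -hm5
          exact (mul_eq_zero.mp this).resolve_right hc
        by_cases hb : x8 = 0
        · -- family 11
          have hx2 : x2 = 0 := by
            have : x2*x7 = 0 := by rw [hb] at hm1; linear_combination -hm1
            exact (mul_eq_zero.mp this).resolve_right hc
          have hx5 : x5 = 0 := by
            have : x5*x7 = 0 := by rw [hb] at hm4; linear_combination -hm4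
            exact (mul_eq_zero.mp this).resolve_right hc
          have hx1 : x1 = 0 := by linear_combination ht - hx5 - hF
          refine Or.inr (Or.inr (Or.inr (Or.inr (Or.inr (Or.inr (Or.inr (Or.inr (Or.inr
            (Or.inr (Or.inl ⟨x7, x4, hc, ?_⟩))))))))))
          exact mat3_congr hx1 hx2 hx3 rfl hx5 hx6 rfl hb hF
        · -- family 7
          refine Or.inr (Or.inr (Or.inr (Or.inr (Or.inr (Or.inr (Or.inl
            ⟨x8, x7, x4, hb, hc, ?_⟩))))))
          refine mat3_congr ?_ ?_ hx3 rfl ?_ hx6 rfl rfl hF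
          · field_simp
            linear_combination hm4 + x7*ht - x7*hF
          · field_simp
            linear_combination -x7*hm1 + x8*hm4 + x7*x8*ht - x7*x8*hF
          · field_simp
            linear_combination -hm4
      · -- A-I / A-II: x7 ≠ 0, x9 ≠ 0
        by_cases hb : x8 = 0
        · -- A-II
          have hx2 : x2 = 0 := by
            have : x2*x9 = 0 := by rw [hb] at hm3; linear_combination hm3
            exact (mul_eq_zero.mp this).resolve_right hF
          have hx5 : x5 = 0 := by
            have : x5*x9 = 0 := by rw [hb] at hm6; linear_combination hm6
            exact (mul_eq_zero.mp this).resolve_right hF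
          have hx1 : x1 = -x9 := by linear_combination ht - hx5
          have ha3 : x3 ≠ 0 := by
            intro h30
            have : x1*x9 = 0 := by rw [h30] at hm2; linear_combination hm2
            have h10 : x1 = 0 := (mul_eq_zero.mp this).resolve_right hF
            exact hF (by linear_combination hx1 - h10)
          by_cases h6 : x6 = 0
          · -- family 9
            have hx4 : x4 = 0 := by
              have : x4*x9 = 0 := by rw [h6] at hm5; linear_combination hm5
              exact (mul_eq_zero.mp this).resolve_right hF
            refine Or.inr (Or.inr (Or.inr (Or.inr (Or.inr (Or.inr (Or.inr (Or.inr (Or.inl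
              ⟨x3, x7, x9, ha3, hc, ?_, ?_⟩))))))))
            · linear_combination x9*hx1 - hm2
            · exact mat3_congr hx1 hx2 rfl hx4 hx5 h6 rfl hb rfl
          · -- family 3
            refine Or.inr (Or.inr (Or.inl ⟨x3, x7, x6, x9, ha3, hc, h6, ?_, ?_⟩))
            · linear_combination x9*hx1 - hm2
            · refine mat3_congr hx1 hx2 rfl ?_ hx5 rfl rfl hb rfl
              have key : x4*x3 = -(x6*x9) :=
                mul_left_cancel₀ hF (by linear_combination x3*hm5 + x6*(x9*hx1 - hm2))
              field_simp
              linear_combination key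
        · -- A-I: x7 ≠ 0, x8 ≠ 0, x9 ≠ 0
          by_cases ha3 : x3 = 0
          · -- family 2
            have hx1 : x1 = 0 := by
              have : x1*x9 = 0 := by rw [ha3] at hm2; linear_combination hm2
              exact (mul_eq_zero.mp this).resolve_right hF
            have hx2 : x2 = 0 := by
              have : x2*x9 = 0 := by rw [ha3] at hm3; linear_combination hm3
              exact (mul_eq_zero.mp this).resolve_right hF
            have h6 : x6 ≠ 0 := by
              intro h60
              have : x5*x9 = 0 := by rw [h60] at hm6; linear_combination hm6
              have h50 : x5 = 0 := (mul_eq_zero.mp this).resolve_right hF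
              exact hF (by linear_combination ht - hx1 - h50)
            refine Or.inr (Or.inl ⟨x8, x7, x6, x9, hb, hc, h6, ?_, ?_⟩)
            · linear_combination x9*ht - hm6 - x9*hx1
            · refine mat3_congr hx1 hx2 ha3 ?_ ?_ rfl rfl rfl rfl
              · field_simp
                linear_combination hm4 + x7*ht - x7*hx1
              · linear_combination ht - hx1
          · by_cases h6 : x6 = 0
            · -- family 5
              have hx4 : x4 = 0 := by
                have : x4*x9 = 0 := by rw [h6] at hm5; linear_combination hm5
                exact (mul_eq_zero.mp this).resolve_right hF
              have hx5 : x5 = 0 := by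
                have : x5*x7 = 0 := by linear_combination -hm4 + x8*hx4
                exact (mul_eq_zero.mp this).resolve_right hc
              refine Or.inr (Or.inr (Or.inr (Or.inr (Or.inl ⟨x3, x8, x7, x9, ha3, hb, hc, ?_, ?_⟩))))
              · linear_combination x9*ht - hm2 - x9*hx5
              · refine mat3_congr ?_ ?_ rfl hx4 hx5 h6 rfl rfl rfl
                · linear_combination ht - hx5
                · field_simp
                  linear_combination -hm1 + x8*ht - x8*hx5
            · -- family 1
              refine Or.inl ⟨x3, x8, x7, x6, x9, ha3, hb, hc, h6, hF, ?_, ?_⟩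
              · linear_combination x9*ht - hm2 - hm6
              · refine mat3_congr ?_ ?_ rfl ?_ ?_ rfl rfl rfl rfl
                · field_simp
                  linear_combination hm2
                · field_simp
                  linear_combination hm3
                · field_simp
                  linear_combination hm5
                · field_simp
                  linear_combination hm6
  · -- backward: each family satisfies the equations
    intro h
    rcases h with ⟨a,b,c,d,F,ha,hb,hc,hd,hF,hF2,rfl⟩ | ⟨b,c,d,s,hb,hc,hd,hs,rfl⟩ |
      ⟨a,c,d,s,ha,hc,hd,hs,rfl⟩ | ⟨a,b,d,s,ha,hb,hd,hs,rfl⟩ | ⟨a,b,c,s,ha,hb,hc,hs,rfl⟩ |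
      ⟨b,d,s,hb,hd,hs,rfl⟩ | ⟨b,c,e,hb,hc,rfl⟩ | ⟨a,d,e,ha,hd,rfl⟩ | ⟨a,c,s,ha,hc,hs,rfl⟩ |
      ⟨d,e,hd,rfl⟩ | ⟨c,e,hc,rfl⟩ | ⟨b,e,hb,rfl⟩ | ⟨a,e,ha,rfl⟩ | ⟨e,f,s,hs,rfl⟩
    · -- family 1
      have key := mat3_congr (k := k)
        (show a*c/F = (a/F)*c by ring) (show a*b/F = (a/F)*b by ring)
        (show a = (a/F)*F by field_simp) (show c*d/F = (d/F)*c by ring)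
        (show b*d/F = (d/F)*b by ring) (show d = (d/F)*F by field_simp)
        (show c = 1*c by ring) (show b = 1*b by ring) (show F = 1*F by ring)
      rw [key]
      exact backward_aux _ _ _ _ _ _ (by field_simp; first | ring1 | linear_combination hF2 | linear_combination -hF2)
    · -- family 2
      have key := mat3_congr (k := k)
        (show (0:k) = 0*c by ring) (show (0:k) = 0*b by ring) (show (0:k) = 0*s by ring)
        (show -(c*s)/b = (-s/b)*c by ring) (show -s = (-s/b)*b by field_simp)
        (show d = (-s/b)*s by field_simp; first | ring1 | linear_combination hs | linear_combination -(hs))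
        (show c = 1*c by ring) (show b = 1*b by ring) (show s = 1*s by ring)
      rw [key]
      exact backward_aux _ _ _ _ _ _ (by field_simp; try ring1)
    · -- family 3
      have hs0 : s ≠ 0 := by
        intro h0
        apply mul_ne_zero ha hc
        rw [h0] at hs
        linear_combination hs
      have key := mat3_congr (k := k)
        (show -s = (a/s)*c by field_simp; first | ring1 | linear_combination hs | linear_combination -(hs))
        (show (0:k) = (a/s)*0 by ring) (show a = (a/s)*s by field_simp)
        (show -(d*s)/a = (d/s)*c by field_simp; first | ring1 | linear_combination -hs)
        (show (0:k) = (d/s)*0 by ring) (show d = (d/s)*s by field_simp)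
        (show c = 1*c by ring) (show (0:k) = 1*0 by ring) (show s = 1*s by ring)
      rw [key]
      exact backward_aux _ _ _ _ _ _ (by field_simp; first | ring1 | linear_combination -hs | linear_combination -(-hs))
    · -- family 4
      have hs0 : s ≠ 0 := by
        intro h0
        apply mul_ne_zero hb hd
        rw [h0] at hs
        linear_combination hs
      have key := mat3_congr (k := k)
        (show (0:k) = (a/s)*0 by ring)
        (show -(a*s)/d = (a/s)*b by field_simp; first | ring1 | linear_combination -hs)
        (show a = (a/s)*s by field_simp)
        (show (0:k) = (d/s)*0 by ring)
        (show -s = (d/s)*b by field_simp; first | ring1 | linear_combination hs | linear_combination -(hs))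
        (show d = (d/s)*s by field_simp)
        (show (0:k) = 1*0 by ring) (show b = 1*b by ring) (show s = 1*s by ring)
      rw [key]
      exact backward_aux _ _ _ _ _ _ (by field_simp; first | ring1 | linear_combination -hs | linear_combination -(-hs))
    · -- family 5
      have hs0 : s ≠ 0 := by
        intro h0
        apply mul_ne_zero ha hc
        rw [h0] at hs
        linear_combination hs
      have key := mat3_congr (k := k)
        (show -s = (a/s)*c by field_simp; first | ring1 | linear_combination hs | linear_combination -(hs))
        (show -(b*s)/c = (a/s)*b by field_simp; first | ring1 | linear_combination -hs)
        (show a = (a/s)*s by field_simp)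
        (show (0:k) = 0*c by ring) (show (0:k) = 0*b by ring) (show (0:k) = 0*s by ring)
        (show c = 1*c by ring) (show b = 1*b by ring) (show s = 1*s by ring)
      rw [key]
      exact backward_aux _ _ _ _ _ _ (by field_simp; first | ring1 | linear_combination -hs | linear_combination -(-hs))
    · -- family 6
      have hs0 : s ≠ 0 := by
        intro h0
        apply mul_ne_zero hb hd
        rw [h0] at hs
        linear_combination hs
      have key := mat3_congr (k := k)
        (show (0:k) = 0*0 by ring) (show (0:k) = 0*b by ring) (show (0:k) = 0*s by ring)
        (show (0:k) = (d/s)*0 by ring)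
        (show -s = (d/s)*b by field_simp; first | ring1 | linear_combination hs | linear_combination -(hs))
        (show d = (d/s)*s by field_simp)
        (show (0:k) = 1*0 by ring) (show b = 1*b by ring) (show s = 1*s by ring)
      rw [key]
      exact backward_aux _ _ _ _ _ _ (by field_simp; first | ring1 | linear_combination -hs | linear_combination -(-hs))
    · -- family 7
      have key := mat3_congr (k := k)
        (show -(e*b)/c = (-(e*b)/c^2)*c by field_simp)
        (show -(e*b^2)/c^2 = (-(e*b)/c^2)*b by ring)
        (show (0:k) = (-(e*b)/c^2)*0 by ring)
        (show e = (e/c)*c by field_simp) (show e*b/c = (e/c)*b by ring)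
        (show (0:k) = (e/c)*0 by ring)
        (show c = 1*c by ring) (show b = 1*b by ring) (show (0:k) = 1*0 by ring)
      rw [key]
      exact backward_aux _ _ _ _ _ _ (by field_simp; ring)
    · -- family 8
      have key := mat3_congr (k := k)
        (show a*e/d = (a/d)*e by ring)
        (show -(a^2*e)/d^2 = (a/d)*(-(a*e)/d) by ring)
        (show a = (a/d)*d by field_simp)
        (show e = 1*e by ring) (show -(a*e)/d = 1*(-(a*e)/d) by ring) (show d = 1*d by ring)
        (show (0:k) = 0*e by ring) (show (0:k) = 0*(-(a*e)/d) by ring) (show (0:k) = 0*d by ring)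
      rw [key]
      exact backward_aux _ _ _ _ _ _ (by field_simp; ring)
    · -- family 9
      have hs0 : s ≠ 0 := by
        intro h0
        apply mul_ne_zero ha hc
        rw [h0] at hs
        linear_combination hs
      have key := mat3_congr (k := k)
        (show -s = (a/s)*c by field_simp; first | ring1 | linear_combination hs | linear_combination -(hs))
        (show (0:k) = (a/s)*0 by ring) (show a = (a/s)*s by field_simp)
        (show (0:k) = 0*c by ring) (show (0:k) = 0*0 by ring) (show (0:k) = 0*s by ring)
        (show c = 1*c by ring) (show (0:k) = 1*0 by ring) (show s = 1*s by ring)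
      rw [key]
      exact backward_aux _ _ _ _ _ _ (by field_simp; first | ring1 | linear_combination -hs | linear_combination -(-hs))
    · -- family 10
      have key := mat3_congr (k := k)
        (show (0:k) = 0*e by ring) (show (0:k) = 0*0 by ring) (show (0:k) = 0*d by ring)
        (show e = 1*e by ring) (show (0:k) = 1*0 by ring) (show d = 1*d by ring)
        (show (0:k) = 0*e by ring) (show (0:k) = 0*0 by ring) (show (0:k) = 0*d by ring)
      rw [key]
      exact backward_aux _ _ _ _ _ _ (by ring)
    · -- family 11
      have key := mat3_congr (k := k)
        (show (0:k) = 0*1 by ring) (show (0:k) = 0*0 by ring) (show (0:k) = 0*0 by ring)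
        (show e = e*1 by ring) (show (0:k) = e*0 by ring) (show (0:k) = e*0 by ring)
        (show c = c*1 by ring) (show (0:k) = c*0 by ring) (show (0:k) = c*0 by ring)
      rw [key]
      exact backward_aux _ _ _ _ _ _ (by ring)
    · -- family 12
      have key := mat3_congr (k := k)
        (show (0:k) = e*0 by ring) (show e = e*1 by ring) (show (0:k) = e*0 by ring)
        (show (0:k) = 0*0 by ring) (show (0:k) = 0*1 by ring) (show (0:k) = 0*0 by ring)
        (show (0:k) = b*0 by ring) (show b = b*1 by ring) (show (0:k) = b*0 by ring)
      rw [key]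
      exact backward_aux _ _ _ _ _ _ (by ring)
    · -- family 13
      have key := mat3_congr (k := k)
        (show (0:k) = 1*0 by ring) (show e = 1*e by ring) (show a = 1*a by ring)
        (show (0:k) = 0*0 by ring) (show (0:k) = 0*e by ring) (show (0:k) = 0*a by ring)
        (show (0:k) = 0*0 by ring) (show (0:k) = 0*e by ring) (show (0:k) = 0*a by ring)
      rw [key]
      exact backward_aux _ _ _ _ _ _ (by ring)
    · -- family 14 (direct)
      intro i q
      rw [sum_eq]
      cases i <;> cases q <;> simp only [mat3] <;>
        first
          | ring1
          | linear_combination hs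
          | linear_combination -hs

end Stmt18
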